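/- arXiv:1010.0982 — 2 statements merged into one kernel-verified Lean document; each statement's English description precedes it below -/
import Mathlib

section
/- Let C and D be CDG-categories and (F, a): C → D a QDG-functor, i.e., F is a degree-preserving additive functor of the underlying graded categories and a assigns to each X ∈ C an element a_X ∈ Hom_D(F(X), F(X)) of degree 1 such that F(d(f)) = d(F(f)) + a_Y F(f) − (−1)^{|f|} F(f) a_X for every homogeneous f: X → Y. Define (h_F)_X = h_{F(X)} + d(a_X) + a_X² − F(h_X). Then the collection (h_F)_X is a morphism of QDG-functors F → F of degree 2, i.e., for every homogeneous g: X → Y in C one has (h_F)_Y ∘ F(g) = F(g) ∘ (h_F)_X (note (−1)^{2|g|} = 1). -/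
/-- The sign `(-1)^i` for `i : ℤ`. -/
def sgn (i : ℤ) : ℤ := if Even i then 1 else -1

/-- A (small) CDG-category: a `ℤ`-graded category with differentials `d` of degree `1`
on the Hom-groups satisfying the Leibniz rule with Koszul signs, and curvature
elements `h X` of degree `2` with `d² f = h_Y ∘ f - f ∘ h_X` and `d (h X) = 0`. -/
structure CDGCat where
  Obj : Type
  Hom : Obj → Obj → Type
  [grp : ∀ X Y, AddCommGroup (Hom X Y)]
  gr : ∀ X Y, ℤ → AddSubgroup (Hom X Y)
  comp : ∀ {X Y Z : Obj}, Hom Y Z → Hom X Y → Hom X Z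
  one : ∀ X, Hom X X
  d : ∀ {X Y : Obj}, Hom X Y → Hom X Y
  h : ∀ X, Hom X X
  comp_add_left : ∀ {X Y Z : Obj} (f f' : Hom Y Z) (g : Hom X Y),
    comp (f + f') g = comp f g + comp f' g
  comp_add_right : ∀ {X Y Z : Obj} (f : Hom Y Z) (g g' : Hom X Y),
    comp f (g + g') = comp f g + comp f g'
  comp_assoc : ∀ {W X Y Z : Obj} (f : Hom Y Z) (g : Hom X Y) (e : Hom W X),
    comp (comp f g) e = comp f (comp g e)
  one_comp : ∀ {X Y : Obj} (f : Hom X Y), comp (one Y) f = f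
  comp_one : ∀ {X Y : Obj} (f : Hom X Y), comp f (one X) = f
  one_mem : ∀ X, one X ∈ gr X X 0
  comp_mem : ∀ {X Y Z : Obj} {i j : ℤ} {f : Hom Y Z} {g : Hom X Y},
    f ∈ gr Y Z i → g ∈ gr X Y j → comp f g ∈ gr X Z (i + j)
  d_add : ∀ {X Y : Obj} (f g : Hom X Y), d (f + g) = d f + d g
  d_mem : ∀ {X Y : Obj} {i : ℤ} {f : Hom X Y}, f ∈ gr X Y i → d f ∈ gr X Y (i + 1)
  leibniz : ∀ {X Y Z : Obj} (i : ℤ) (f : Hom Y Z), f ∈ gr Y Z i →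
    ∀ g : Hom X Y, d (comp f g) = comp (d f) g + sgn i • comp f (d g)
  h_mem : ∀ X, h X ∈ gr X X 2
  d_sq : ∀ {X Y : Obj} (f : Hom X Y), d (d f) = comp (h Y) f - comp f (h X)
  d_h : ∀ X, d (h X) = 0

attribute [instance] CDGCat.grp


namespace CDGCat
variable (C : CDGCat)

def dHom {X Y : C.Obj} : C.Hom X Y →+ C.Hom X Y := AddMonoidHom.mk' C.d (C.d_add)

def compL {X Y Z : C.Obj} (g : C.Hom X Y) : C.Hom Y Z →+ C.Hom X Z :=
  AddMonoidHom.mk' (fun f => C.comp f g) (fun f f' => C.comp_add_left f f' g)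

def compR {X Y Z : C.Obj} (f : C.Hom Y Z) : C.Hom X Y →+ C.Hom X Z :=
  AddMonoidHom.mk' (C.comp f) (C.comp_add_right f)

lemma d_sub {X Y : C.Obj} (f g : C.Hom X Y) : C.d (f - g) = C.d f - C.d g :=
  map_sub C.dHom f g

lemma d_smul {X Y : C.Obj} (n : ℤ) (f : C.Hom X Y) : C.d (n • f) = n • C.d f :=
  map_zsmul C.dHom n f

lemma comp_sub_left {X Y Z : C.Obj} (f f' : C.Hom Y Z) (g : C.Hom X Y) :
    C.comp (f - f') g = C.comp f g - C.comp f' g := map_sub (C.compL g) f f'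

lemma comp_sub_right {X Y Z : C.Obj} (f : C.Hom Y Z) (g g' : C.Hom X Y) :
    C.comp f (g - g') = C.comp f g - C.comp f g' := map_sub (C.compR f) g g'

lemma comp_smul_left {X Y Z : C.Obj} (n : ℤ) (f : C.Hom Y Z) (g : C.Hom X Y) :
    C.comp (n • f) g = n • C.comp f g := map_zsmul (C.compL g) n f

lemma comp_smul_right {X Y Z : C.Obj} (n : ℤ) (f : C.Hom Y Z) (g : C.Hom X Y) :
    C.comp f (n • g) = n • C.comp f g := map_zsmul (C.compR f) n g

end CDGCat

lemma sgn_one : sgn 1 = -1 := by simp [sgn]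

lemma sgn_succ (i : ℤ) : sgn (i + 1) = -sgn i := by
  simp only [sgn, Int.even_add_one]
  by_cases h : Even i <;> simp [h]


/-- The curvature of a QDG-functor is a morphism of QDG-functors of
degree `2`.  A QDG-functor `(F, a) : C → D` between CDG-categories consists of a
degree-preserving additive functor `F` and degree-`1` elements `a X : F X → F X`
with `F (d f) = d (F f) + a_Y ∘ F f - (-1)^{|f|} F f ∘ a_X` for homogeneous `f`.
With `(h_F)_X = h_{F X} + d (a X) + (a X)² - F (h X)`, the conclusion is that for
every homogeneous `g : X → Y` one has `(h_F)_Y ∘ F g = F g ∘ (h_F)_X`. -/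
theorem qdg_functor_curvature_is_natural
    (C D : CDGCat)
    (F : C.Obj → D.Obj)
    (Fm : ∀ {X Y : C.Obj}, C.Hom X Y → D.Hom (F X) (F Y))
    (a : ∀ X : C.Obj, D.Hom (F X) (F X))
    (Fm_add : ∀ {X Y : C.Obj} (f g : C.Hom X Y), Fm (f + g) = Fm f + Fm g)
    (Fm_mem : ∀ {X Y : C.Obj} (i : ℤ) (f : C.Hom X Y),
      f ∈ C.gr X Y i → Fm f ∈ D.gr (F X) (F Y) i)
    (Fm_comp : ∀ {X Y Z : C.Obj} (f : C.Hom Y Z) (g : C.Hom X Y),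
      Fm (C.comp f g) = D.comp (Fm f) (Fm g))
    (Fm_one : ∀ X : C.Obj, Fm (C.one X) = D.one (F X))
    (a_mem : ∀ X : C.Obj, a X ∈ D.gr (F X) (F X) 1)
    (Fm_d : ∀ {X Y : C.Obj} (i : ℤ) (f : C.Hom X Y), f ∈ C.gr X Y i →
      Fm (C.d f) = D.d (Fm f) + D.comp (a Y) (Fm f) - sgn i • D.comp (Fm f) (a X)) :
    ∀ {X Y : C.Obj} (i : ℤ) (g : C.Hom X Y), g ∈ C.gr X Y i →
      D.comp (D.h (F Y) + D.d (a Y) + D.comp (a Y) (a Y) - Fm (C.h Y)) (Fm g)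
        = D.comp (Fm g) (D.h (F X) + D.d (a X) + D.comp (a X) (a X) - Fm (C.h X)) := by
  intro X Y i g hg
  have hgd : C.d g ∈ C.gr X Y (i + 1) := C.d_mem hg
  -- F of d² g, computed via d_sq in C
  have e0 : Fm (C.d (C.d g)) = D.comp (Fm (C.h Y)) (Fm g) - D.comp (Fm g) (Fm (C.h X)) := by
    rw [C.d_sq g,
      show Fm (C.comp (C.h Y) g - C.comp g (C.h X))
          = Fm (C.comp (C.h Y) g) - Fm (C.comp g (C.h X)) from
        map_sub (AddMonoidHom.mk' Fm fun u v => Fm_add u v) _ _,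
      Fm_comp, Fm_comp]
  -- F of d² g, computed via Fm_d twice
  have e1 := Fm_d (i + 1) (C.d g) hgd
  rw [Fm_d i g hg] at e1
  -- Leibniz expansions
  have la : D.d (D.comp (a Y) (Fm g))
      = D.comp (D.d (a Y)) (Fm g) + (-1 : ℤ) • D.comp (a Y) (D.d (Fm g)) := by
    simpa [sgn_one] using D.leibniz 1 (a Y) (a_mem Y) (Fm g)
  have lf : D.d (D.comp (Fm g) (a X))
      = D.comp (D.d (Fm g)) (a X) + sgn i • D.comp (Fm g) (D.d (a X)) :=
    D.leibniz i (Fm g) (Fm_mem i g hg) (a X)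
  have hss : ∀ (x : D.Hom (F X) (F Y)), sgn i • sgn i • x = x := by
    intro x
    rw [smul_smul, show sgn i * sgn i = 1 by unfold sgn; split <;> norm_num]
    exact one_smul _ _
  rw [sgn_succ] at e1
  simp only [D.d_add, D.d_sub, D.d_smul, la, lf, D.comp_add_left, D.comp_add_right,
    D.comp_sub_left, D.comp_sub_right, D.comp_smul_left, D.comp_smul_right,
    D.comp_assoc, neg_smul, one_smul, smul_add, smul_sub, hss] at e1
  have key := e1.symm.trans e0
  rw [D.d_sq (Fm g)] at key
  rw [← sub_eq_zero] at key ⊢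
  simp only [D.comp_add_left, D.comp_add_right, D.comp_sub_left, D.comp_sub_right,
    D.comp_assoc] at key ⊢
  abel_nf at key ⊢
  -- hopefully key now matches goal up to abel normal form
  rw [← key]
end

section
/- Let B be a CDG-ring and let N be a contractible CDG-module over B, i.e., there is a closed degree-(−1) endomorphism t of N (meaning d(t) := d_N ∘ t + t ∘ d_N = id_N). Let p: P → N be a surjective closed morphism of CDG-modules of degree 0 (p d_P = d_N p) where P is also contractible with contracting homotopy θ (d(θ) = id_P), and assume P is projective in the category of CDG-modules and closed morphisms, in the sense that any closed morphism from P to a target of a surjective closed morphism lifts. Then the kernel K = ker(p) is a CDG-submodule of P and K is contractible: there exists a contracting homotopy θ' on P with p ∘ θ' = t ∘ p, and its restriction to K is a contracting homotopy for K. -/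
/-- Let `B` be a CDG-ring, `N` a contractible CDG-module over `B`
with contracting homotopy `t` (a degree-`(-1)` module endomorphism with
`d_N t + t d_N = id`), and `p : P → N` a surjective closed degree-`0` morphism of
CDG-modules, where `P` is contractible with contracting homotopy `θ` and is
projective in the sense that closed degree-`(-1)` morphisms out of `P` lift along `p`.
Then the kernel `K = ker p` is a CDG-submodule of `P` and is contractible: there is a
contracting homotopy `θ'` on `P` with `p ∘ θ' = t ∘ p`, whose restriction to `K` is a
contracting homotopy for `K`. -/
theorem contractible_kernel_of_projective_cover
    {B N P : Type*} [Ring B]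
    [AddCommGroup N] [Module B N] [AddCommGroup P] [Module B P]
    (𝒜 : ℤ → AddSubgroup B) [GradedRing 𝒜]
    (d : B →+ B) (h : B)
    (d_deg : ∀ i : ℤ, ∀ a ∈ 𝒜 i, d a ∈ 𝒜 (i + 1))
    (leibniz : ∀ i : ℤ, ∀ a ∈ 𝒜 i, ∀ x : B,
      d (a * x) = d a * x + sgn i • (a * d x))
    (h_deg : h ∈ 𝒜 2)
    (d_sq : ∀ x : B, d (d x) = h * x - x * h)
    (d_h : d h = 0)
    -- the CDG-module `N`
    (ℳN : ℤ → AddSubgroup N)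
    (smulN_mem : ∀ i n : ℤ, ∀ b ∈ 𝒜 i, ∀ m ∈ ℳN n, b • m ∈ ℳN (i + n))
    (dN : N →+ N)
    (dN_deg : ∀ n : ℤ, ∀ m ∈ ℳN n, dN m ∈ ℳN (n + 1))
    (dN_leibniz : ∀ i : ℤ, ∀ b ∈ 𝒜 i, ∀ m : N,
      dN (b • m) = d b • m + sgn i • (b • dN m))
    (dN_sq : ∀ m : N, dN (dN m) = h • m)
    -- the CDG-module `P`
    (ℳP : ℤ → AddSubgroup P)
    (smulP_mem : ∀ i n : ℤ, ∀ b ∈ 𝒜 i, ∀ x ∈ ℳP n, b • x ∈ ℳP (i + n))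
    (dP : P →+ P)
    (dP_deg : ∀ n : ℤ, ∀ x ∈ ℳP n, dP x ∈ ℳP (n + 1))
    (dP_leibniz : ∀ i : ℤ, ∀ b ∈ 𝒜 i, ∀ x : P,
      dP (b • x) = d b • x + sgn i • (b • dP x))
    (dP_sq : ∀ x : P, dP (dP x) = h • x)
    -- `p : P → N` is a surjective closed morphism of CDG-modules of degree `0`
    (p : P →ₗ[B] N)
    (p_deg : ∀ n : ℤ, ∀ x ∈ ℳP n, p x ∈ ℳN n)
    (p_closed : ∀ x : P, p (dP x) = dN (p x))
    (p_surj : Function.Surjective p)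
    -- `t` is a contracting homotopy for `N`
    (t : N →+ N)
    (t_deg : ∀ n : ℤ, ∀ m ∈ ℳN n, t m ∈ ℳN (n - 1))
    (t_lin : ∀ i : ℤ, ∀ b ∈ 𝒜 i, ∀ m : N, t (b • m) = sgn i • (b • t m))
    (t_htpy : ∀ m : N, dN (t m) + t (dN m) = m)
    -- `θ` is a contracting homotopy for `P`
    (θ : P →+ P)
    (θ_deg : ∀ n : ℤ, ∀ x ∈ ℳP n, θ x ∈ ℳP (n - 1))
    (θ_lin : ∀ i : ℤ, ∀ b ∈ 𝒜 i, ∀ x : P, θ (b • x) = sgn i • (b • θ x))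
    (θ_htpy : ∀ x : P, dP (θ x) + θ (dP x) = x)
    -- `P` is projective: closed degree-`(-1)` morphisms `P → N` lift along `p`
    (P_proj : ∀ f : P →+ N,
      (∀ n : ℤ, ∀ x ∈ ℳP n, f x ∈ ℳN (n - 1)) →
      (∀ i : ℤ, ∀ b ∈ 𝒜 i, ∀ x : P, f (b • x) = sgn i • (b • f x)) →
      (∀ x : P, dN (f x) + f (dP x) = 0) →
      ∃ g : P →+ P,
        (∀ n : ℤ, ∀ x ∈ ℳP n, g x ∈ ℳP (n - 1)) ∧
        (∀ i : ℤ, ∀ b ∈ 𝒜 i, ∀ x : P, g (b • x) = sgn i • (b • g x)) ∧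
        (∀ x : P, dP (g x) + g (dP x) = 0) ∧
        (∀ x : P, p (g x) = f x)) :
    -- the kernel of `p` is a CDG-submodule, and …
    (∀ x : P, p x = 0 → p (dP x) = 0) ∧
    -- … there is a contracting homotopy `θ'` on `P` compatible with `p` and `t`,
    -- which therefore restricts to a contracting homotopy for `K = ker p`
    (∃ θ' : P →+ P,
      (∀ n : ℤ, ∀ x ∈ ℳP n, θ' x ∈ ℳP (n - 1)) ∧
      (∀ i : ℤ, ∀ b ∈ 𝒜 i, ∀ x : P, θ' (b • x) = sgn i • (b • θ' x)) ∧
      (∀ x : P, dP (θ' x) + θ' (dP x) = x) ∧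
      (∀ x : P, p (θ' x) = t (p x)) ∧
      (∀ x : P, p x = 0 → p (θ' x) = 0)) := by
  constructor
  · intro x hx
    rw [p_closed, hx, map_zero]
  · -- define f = p ∘ θ - t ∘ p
    set f : P →+ N := (p.toAddMonoidHom.comp θ) - (t.comp p.toAddMonoidHom) with hf
    have hfx : ∀ x : P, f x = p (θ x) - t (p x) := fun x => rfl
    obtain ⟨g, g_deg, g_lin, g_closed, g_lift⟩ := P_proj f
      (by
        intro n x hx
        rw [hfx]
        exact sub_mem (p_deg _ _ (θ_deg n x hx)) (t_deg n _ (p_deg n x hx)))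
      (by
        intro i b hb x
        simp only [hfx, map_smul, θ_lin i b hb, t_lin i b hb, map_zsmul, smul_sub])
      (by
        intro x
        have h1 : dN (p (θ x)) = p (dP (θ x)) := (p_closed _).symm
        have h2 : t (p (dP x)) = t (dN (p x)) := by rw [p_closed]
        rw [hfx, hfx, map_sub, h1, h2]
        have h3 := θ_htpy x
        have h4 := t_htpy (p x)
        have : p (dP (θ x)) + p (θ (dP x)) = p x := by
          rw [← map_add]; rw [h3]
        linear_combination (norm := abel) this - h4)
    refine ⟨θ - g, ?_, ?_, ?_, ?_, ?_⟩
    · intro n x hx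
      exact sub_mem (θ_deg n x hx) (g_deg n x hx)
    · intro i b hb x
      simp only [AddMonoidHom.sub_apply, θ_lin i b hb, g_lin i b hb, smul_sub]
    · intro x
      have h3 := θ_htpy x
      have h4 := g_closed x
      simp only [AddMonoidHom.sub_apply, map_sub]
      linear_combination (norm := abel) h3 - h4
    · intro x
      have := g_lift x
      rw [hfx] at this
      simp only [AddMonoidHom.sub_apply, map_sub, this]
      abel
    · intro x hx
      have := g_lift x
      rw [hfx] at this
      simp only [AddMonoidHom.sub_apply, map_sub, this, hx, map_zero]
      abel
end
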